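/- (Ky Fan inequality, used as Theorem 1 of Fan 1949 in the proof of the main theorem.) Let M ∈ ℝ^{n×n} be symmetric with eigenvalues μ_1 ≤ μ_2 ≤ … ≤ μ_n (counted with multiplicity). For every m ≤ n and every orthonormal family u_1,…,u_m ∈ ℝⁿ, one has Σ_{k=1}^m u_kᵀ M u_k ≥ Σ_{k=1}^m μ_k, and equality is attained when u_1,…,u_m are orthonormal eigenvectors of M corresponding to μ_1,…,μ_m. -/
import Mathlib


open Matrix

/-- A family of vectors is orthonormal. -/
def OrthonormalFamily {r n : ℕ} (u : Fin r → Fin n → ℝ) : Prop :=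
  ∀ j k, u j ⬝ᵥ u k = if j = k then (1 : ℝ) else 0

lemma onf_mul_transpose {r n : ℕ} (u : Fin r → Fin n → ℝ) (hu : OrthonormalFamily u) :
    (Matrix.of u) * (Matrix.of u)ᵀ = 1 := by
  ext j k
  simpa [Matrix.mul_apply, Matrix.one_apply, dotProduct] using hu j k

theorem ky_fan_part1 {n m : ℕ} (hm : m ≤ n)
    (M : Matrix (Fin n) (Fin n) ℝ)
    (μ : Fin n → ℝ) (hμmono : Monotone μ)
    (w : Fin n → Fin n → ℝ) (hw : OrthonormalFamily w)
    (hweig : ∀ j, M.mulVec (w j) = μ j • w j)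
    (u : Fin m → Fin n → ℝ) (hu : OrthonormalFamily u) :
    (∑ k : Fin m, μ (Fin.castLE hm k)) ≤ ∑ k : Fin m, u k ⬝ᵥ M.mulVec (u k) := by
  classical
  set W : Matrix (Fin n) (Fin n) ℝ := Matrix.of w with hWdef
  have hWWt : W * Wᵀ = 1 := onf_mul_transpose w hw
  have hWtW : Wᵀ * W = 1 := mul_eq_one_comm.mp hWWt
  have hMW : M * Wᵀ = Wᵀ * Matrix.diagonal μ := by
    ext i j
    rw [Matrix.mul_diagonal]
    have h1 : (M * Wᵀ) i j = M.mulVec (w j) i := by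
      simp [hWdef, Matrix.mul_apply, Matrix.mulVec, dotProduct]
    rw [h1, hweig j]
    simp [hWdef, mul_comm]
  have key : ∀ x z : Fin n → ℝ, x ⬝ᵥ Wᵀ.mulVec z = (W.mulVec x) ⬝ᵥ z := by
    intro x z
    rw [Matrix.dotProduct_mulVec, Matrix.vecMul_transpose]
  -- quadratic form
  have hquad : ∀ x : Fin n → ℝ, x ⬝ᵥ M.mulVec x
      = ∑ j : Fin n, μ j * (W.mulVec x j)^2 := by
    intro x
    have haux : Wᵀ.mulVec (W.mulVec x) = x := by
      rw [Matrix.mulVec_mulVec, hWtW, Matrix.one_mulVec]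
    have hx : M.mulVec x = Wᵀ.mulVec ((Matrix.diagonal μ).mulVec (W.mulVec x)) := by
      calc M.mulVec x = M.mulVec (Wᵀ.mulVec (W.mulVec x)) := by rw [haux]
        _ = (M * Wᵀ).mulVec (W.mulVec x) := by rw [Matrix.mulVec_mulVec]
        _ = Wᵀ.mulVec ((Matrix.diagonal μ).mulVec (W.mulVec x)) := by
            rw [hMW, ← Matrix.mulVec_mulVec]
    rw [hx, key]
    apply Finset.sum_congr rfl
    intro j _
    rw [Matrix.mulVec_diagonal]
    ring
  -- the coefficient matrix
  set U : Matrix (Fin m) (Fin n) ℝ := Matrix.of u with hUdef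
  have hUUt : U * Uᵀ = 1 := onf_mul_transpose u hu
  set C : Matrix (Fin m) (Fin n) ℝ := U * Wᵀ with hCdef
  have hCW : ∀ k j, W.mulVec (u k) j = C k j := by
    intro k j
    simp [hCdef, hUdef, hWdef, Matrix.mul_apply, Matrix.mulVec, dotProduct, mul_comm]
  have hCCt : C * Cᵀ = 1 := by
    rw [hCdef, Matrix.transpose_mul, Matrix.transpose_transpose, Matrix.mul_assoc,
      ← Matrix.mul_assoc Wᵀ, hWtW, Matrix.one_mul, hUUt]
  set P : Matrix (Fin n) (Fin n) ℝ := Cᵀ * C with hPdef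
  have hPP : P * P = P := by
    rw [hPdef, Matrix.mul_assoc, ← Matrix.mul_assoc C, hCCt, Matrix.one_mul]
  have hPsymm : Pᵀ = P := by
    rw [hPdef, Matrix.transpose_mul, Matrix.transpose_transpose]
  set t : Fin n → ℝ := fun j => ∑ k : Fin m, (W.mulVec (u k) j)^2 with htdef
  have htP : ∀ j, t j = P j j := by
    intro j
    simp only [htdef, hPdef, Matrix.mul_apply, Matrix.transpose_apply, pow_two]
    apply Finset.sum_congr rfl
    intro k _
    rw [hCW]
  have ht0 : ∀ j, 0 ≤ t j := fun j => Finset.sum_nonneg fun k _ => sq_nonneg _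
  have ht1 : ∀ j, t j ≤ 1 := by
    intro j
    have h1 : P j j = ∑ i : Fin n, (P j i)^2 := by
      conv_lhs => rw [← hPP]
      rw [Matrix.mul_apply]
      apply Finset.sum_congr rfl
      intro i _
      have hsy := congrFun (congrFun hPsymm i) j
      rw [Matrix.transpose_apply] at hsy
      rw [hsy.symm, pow_two]
    have h2 : (P j j)^2 ≤ ∑ i : Fin n, (P j i)^2 :=
      Finset.single_le_sum (f := fun i => (P j i)^2) (fun i _ => sq_nonneg _) (Finset.mem_univ j)
    rw [htP]
    nlinarith [h1, h2]
  have htsum : ∑ j : Fin n, t j = (m : ℝ) := by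
    have h1 : ∑ j : Fin n, t j = P.trace := by
      simp only [Matrix.trace, Matrix.diag]
      exact Finset.sum_congr rfl fun j _ => htP j
    rw [h1, hPdef, Matrix.trace_mul_comm, hCCt, Matrix.trace_one]
    simp
  have hsum1 : ∑ k : Fin m, u k ⬝ᵥ M.mulVec (u k) = ∑ j : Fin n, μ j * t j := by
    simp only [hquad, htdef, Finset.mul_sum]
    exact Finset.sum_comm
  rw [hsum1]
  -- combinatorial step
  rcases Nat.eq_zero_or_pos m with hm0 | hmpos
  · subst hm0
    simp only [Finset.univ_eq_empty, Finset.sum_empty]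
    exact Finset.sum_nonneg fun j _ => by
      have : t j = 0 := by simp [htdef]
      rw [this, mul_zero]
  · set c0 : ℝ := μ (Fin.castLE hm ⟨m - 1, Nat.sub_lt hmpos one_pos⟩) with hc0
    set s : Fin n → ℝ := fun j => if (j : ℕ) < m then 1 else 0 with hsdef
    have hreindex : ∀ f : Fin n → ℝ,
        ∑ j : Fin n, (if (j : ℕ) < m then f j else 0) = ∑ k : Fin m, f (Fin.castLE hm k) := by
      intro f
      set g : ℕ → ℝ := fun i => if h : i < n then f ⟨i, h⟩ else 0 with hg
      have hfilter : (Finset.range n).filter (· < m) = Finset.range m := by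
        ext i; simp; omega
      have h1 : ∑ j : Fin n, (if (j : ℕ) < m then f j else 0)
          = ∑ i ∈ Finset.range m, g i := by
        have hc : ∀ j : Fin n, (if (j : ℕ) < m then f j else 0)
            = (fun i => if i < m then g i else 0) (j : ℕ) := by
          intro j; simp only [hg]; by_cases h : (j : ℕ) < m <;> simp [h, j.isLt]
        rw [Finset.sum_congr rfl fun j _ => hc j,
          Fin.sum_univ_eq_sum_range (fun i => if i < m then g i else 0) n,
          ← Finset.sum_filter, hfilter]
      have h2 : ∑ k : Fin m, f (Fin.castLE hm k) = ∑ i ∈ Finset.range m, g i := by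
        have hc : ∀ k : Fin m, f (Fin.castLE hm k) = g (k : ℕ) := by
          intro k; simp only [hg]; rw [dif_pos (lt_of_lt_of_le k.isLt hm)]; rfl
        rw [Finset.sum_congr rfl fun k _ => hc k, Fin.sum_univ_eq_sum_range (fun i => g i) m]
      rw [h1, h2]
    have hssum : ∑ j : Fin n, s j = (m : ℝ) := by
      have := hreindex (fun _ => 1)
      simpa [hsdef] using this
    have hμs : ∑ j : Fin n, μ j * s j = ∑ k : Fin m, μ (Fin.castLE hm k) := by
      have := hreindex μ
      rw [← this]
      apply Finset.sum_congr rfl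
      intro j _
      simp only [hsdef]
      by_cases h : (j : ℕ) < m <;> simp [h]
    have hpt : ∀ j : Fin n, μ j * s j + c0 * (t j - s j) ≤ μ j * t j := by
      intro j
      by_cases h : (j : ℕ) < m
      · have hμle : μ j ≤ c0 := by
          apply hμmono
          simp only [Fin.le_def, Fin.castLE]
          omega
        have hs1 : s j = 1 := by simp [hsdef, h]
        nlinarith [ht1 j, ht0 j]
      · have hμge : c0 ≤ μ j := by
          apply hμmono
          simp only [Fin.le_def, Fin.castLE]
          omega
        have hs0 : s j = 0 := by simp [hsdef, h]
        nlinarith [ht0 j]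
    have hsumle : ∑ j : Fin n, (μ j * s j + c0 * (t j - s j)) ≤ ∑ j : Fin n, μ j * t j :=
      Finset.sum_le_sum fun j _ => hpt j
    have hexp : ∑ j : Fin n, (μ j * s j + c0 * (t j - s j))
        = (∑ j : Fin n, μ j * s j) + c0 * ((∑ j : Fin n, t j) - ∑ j : Fin n, s j) := by
      rw [Finset.sum_add_distrib, ← Finset.mul_sum, Finset.sum_sub_distrib]
    rw [← hμs]
    rw [hexp, htsum, hssum] at hsumle
    simpa using hsumle

/-- Ky Fan inequality: if `M` is symmetric with eigenvalues `μ_1 ≤ … ≤ μ_n`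
(listed with multiplicity, witnessed by an orthonormal eigenbasis `w`), then for any
`m ≤ n` and any orthonormal family `u_1,…,u_m`, `Σ_k u_kᵀ M u_k ≥ Σ_{k≤m} μ_k`;
equality is attained when the `u_k` are orthonormal eigenvectors of `M` for
`μ_1,…,μ_m`. -/
theorem ky_fan_inequality (n m : ℕ) (hm : m ≤ n)
    (M : Matrix (Fin n) (Fin n) ℝ) (hM : M.IsSymm)
    (μ : Fin n → ℝ) (hμmono : Monotone μ)
    (w : Fin n → Fin n → ℝ) (hw : OrthonormalFamily w)
    (hweig : ∀ j, M.mulVec (w j) = μ j • w j) :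
    (∀ u : Fin m → Fin n → ℝ, OrthonormalFamily u →
      (∑ k : Fin m, μ (Fin.castLE hm k)) ≤ ∑ k : Fin m, u k ⬝ᵥ M.mulVec (u k)) ∧
    (∀ u : Fin m → Fin n → ℝ, OrthonormalFamily u →
      (∀ k : Fin m, M.mulVec (u k) = μ (Fin.castLE hm k) • u k) →
      (∑ k : Fin m, u k ⬝ᵥ M.mulVec (u k)) = ∑ k : Fin m, μ (Fin.castLE hm k)) := by
  constructor
  · intro u hu
    exact ky_fan_part1 hm M μ hμmono w hw hweig u hu
  · intro u hu hueig
    apply Finset.sum_congr rfl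
    intro k _
    rw [hueig k, dotProduct_smul, hu k k]
    simp
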